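/- Duality scaling identity for tetrahedroids: T*_{a,b,c}(abc·X₀, c·X₁, b·X₂, a·X₃) = (abc)²·T_{a,b,c}(X₀,X₁,X₂,X₃). -/

import Mathlib

open Matrix

private lemma fv4_3 : ((3 : Fin 4) : ℕ) = 3 := rfl
private lemma fv5_3 : ((3 : Fin 5) : ℕ) = 3 := rfl
private lemma fv5_4 : ((4 : Fin 5) : ℕ) = 4 := rfl
private lemma fmk4_2 (h : 2 < 4) : (⟨2, h⟩ : Fin 4) = 2 := rfl
private lemma fmk4_3 (h : 3 < 4) : (⟨3, h⟩ : Fin 4) = 3 := rfl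
private lemma fmk5_2 (h : 2 < 5) : (⟨2, h⟩ : Fin 5) = 2 := rfl
private lemma fmk5_3 (h : 3 < 5) : (⟨3, h⟩ : Fin 5) = 3 := rfl
private lemma fmk5_4 (h : 4 < 5) : (⟨4, h⟩ : Fin 5) = 4 := rfl
set_option maxHeartbeats 4000000 in
theorem det_fin_five (M : Matrix (Fin 5) (Fin 5) ℝ) :
    M.det =
      M 0 0 * (M 1 1 * (M 2 2 * (M 3 3 * M 4 4 - M 3 4 * M 4 3) - M 2 3 * (M 3 2 * M 4 4 - M 3 4 * M 4 2) + M 2 4 * (M 3 2 * M 4 3 - M 3 3 * M 4 2))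
             - M 1 2 * (M 2 1 * (M 3 3 * M 4 4 - M 3 4 * M 4 3) - M 2 3 * (M 3 1 * M 4 4 - M 3 4 * M 4 1) + M 2 4 * (M 3 1 * M 4 3 - M 3 3 * M 4 1))
             + M 1 3 * (M 2 1 * (M 3 2 * M 4 4 - M 3 4 * M 4 2) - M 2 2 * (M 3 1 * M 4 4 - M 3 4 * M 4 1) + M 2 4 * (M 3 1 * M 4 2 - M 3 2 * M 4 1))
             - M 1 4 * (M 2 1 * (M 3 2 * M 4 3 - M 3 3 * M 4 2) - M 2 2 * (M 3 1 * M 4 3 - M 3 3 * M 4 1) + M 2 3 * (M 3 1 * M 4 2 - M 3 2 * M 4 1)))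
    - M 0 1 * (M 1 0 * (M 2 2 * (M 3 3 * M 4 4 - M 3 4 * M 4 3) - M 2 3 * (M 3 2 * M 4 4 - M 3 4 * M 4 2) + M 2 4 * (M 3 2 * M 4 3 - M 3 3 * M 4 2))
             - M 1 2 * (M 2 0 * (M 3 3 * M 4 4 - M 3 4 * M 4 3) - M 2 3 * (M 3 0 * M 4 4 - M 3 4 * M 4 0) + M 2 4 * (M 3 0 * M 4 3 - M 3 3 * M 4 0))
             + M 1 3 * (M 2 0 * (M 3 2 * M 4 4 - M 3 4 * M 4 2) - M 2 2 * (M 3 0 * M 4 4 - M 3 4 * M 4 0) + M 2 4 * (M 3 0 * M 4 2 - M 3 2 * M 4 0))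
             - M 1 4 * (M 2 0 * (M 3 2 * M 4 3 - M 3 3 * M 4 2) - M 2 2 * (M 3 0 * M 4 3 - M 3 3 * M 4 0) + M 2 3 * (M 3 0 * M 4 2 - M 3 2 * M 4 0)))
    + M 0 2 * (M 1 0 * (M 2 1 * (M 3 3 * M 4 4 - M 3 4 * M 4 3) - M 2 3 * (M 3 1 * M 4 4 - M 3 4 * M 4 1) + M 2 4 * (M 3 1 * M 4 3 - M 3 3 * M 4 1))
             - M 1 1 * (M 2 0 * (M 3 3 * M 4 4 - M 3 4 * M 4 3) - M 2 3 * (M 3 0 * M 4 4 - M 3 4 * M 4 0) + M 2 4 * (M 3 0 * M 4 3 - M 3 3 * M 4 0))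
             + M 1 3 * (M 2 0 * (M 3 1 * M 4 4 - M 3 4 * M 4 1) - M 2 1 * (M 3 0 * M 4 4 - M 3 4 * M 4 0) + M 2 4 * (M 3 0 * M 4 1 - M 3 1 * M 4 0))
             - M 1 4 * (M 2 0 * (M 3 1 * M 4 3 - M 3 3 * M 4 1) - M 2 1 * (M 3 0 * M 4 3 - M 3 3 * M 4 0) + M 2 3 * (M 3 0 * M 4 1 - M 3 1 * M 4 0)))
    - M 0 3 * (M 1 0 * (M 2 1 * (M 3 2 * M 4 4 - M 3 4 * M 4 2) - M 2 2 * (M 3 1 * M 4 4 - M 3 4 * M 4 1) + M 2 4 * (M 3 1 * M 4 2 - M 3 2 * M 4 1))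
             - M 1 1 * (M 2 0 * (M 3 2 * M 4 4 - M 3 4 * M 4 2) - M 2 2 * (M 3 0 * M 4 4 - M 3 4 * M 4 0) + M 2 4 * (M 3 0 * M 4 2 - M 3 2 * M 4 0))
             + M 1 2 * (M 2 0 * (M 3 1 * M 4 4 - M 3 4 * M 4 1) - M 2 1 * (M 3 0 * M 4 4 - M 3 4 * M 4 0) + M 2 4 * (M 3 0 * M 4 1 - M 3 1 * M 4 0))
             - M 1 4 * (M 2 0 * (M 3 1 * M 4 2 - M 3 2 * M 4 1) - M 2 1 * (M 3 0 * M 4 2 - M 3 2 * M 4 0) + M 2 2 * (M 3 0 * M 4 1 - M 3 1 * M 4 0)))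
    + M 0 4 * (M 1 0 * (M 2 1 * (M 3 2 * M 4 3 - M 3 3 * M 4 2) - M 2 2 * (M 3 1 * M 4 3 - M 3 3 * M 4 1) + M 2 3 * (M 3 1 * M 4 2 - M 3 2 * M 4 1))
             - M 1 1 * (M 2 0 * (M 3 2 * M 4 3 - M 3 3 * M 4 2) - M 2 2 * (M 3 0 * M 4 3 - M 3 3 * M 4 0) + M 2 3 * (M 3 0 * M 4 2 - M 3 2 * M 4 0))
             + M 1 2 * (M 2 0 * (M 3 1 * M 4 3 - M 3 3 * M 4 1) - M 2 1 * (M 3 0 * M 4 3 - M 3 3 * M 4 0) + M 2 3 * (M 3 0 * M 4 1 - M 3 1 * M 4 0))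
             - M 1 3 * (M 2 0 * (M 3 1 * M 4 2 - M 3 2 * M 4 1) - M 2 1 * (M 3 0 * M 4 2 - M 3 2 * M 4 0) + M 2 2 * (M 3 0 * M 4 1 - M 3 1 * M 4 0))) := by
  simp only [Matrix.det_succ_row_zero, Matrix.submatrix_apply, Matrix.submatrix_submatrix,
    Matrix.det_unique, Fin.default_eq_zero, Function.comp_apply, Fin.sum_univ_succ,
    Fin.zero_succAbove, Fin.succ_succAbove_zero, Fin.succ_succAbove_succ, Fin.succ_zero_eq_one,
    Fin.succ_one_eq_two, Finset.univ_unique, Fin.val_zero, Fin.val_succ, Fin.val_eq_zero,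
    Finset.sum_singleton]
  norm_num [Fin.succAbove, Fin.castSucc, Fin.castAdd, Fin.castLE, Fin.succ, Fin.lt_def,
    Fin.ext_iff, fmk4_2, fmk4_3, fmk5_2, fmk5_3, fmk5_4, fv4_3, fv5_3, fv5_4]
  ring

/-- Half the tetrahedroid determinant `T_{a,b,c}`. -/
noncomputable def T (a b c X0 X1 X2 X3 : ℝ) : ℝ :=
  Matrix.det !![(0 : ℝ), 1, 1, 1, X0^2;
                1, 0, a^2, b^2, X1^2;
                1, a^2, 0, c^2, X2^2;
                1, b^2, c^2, 0, X3^2;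
                X0^2, X1^2, X2^2, X3^2, 0] / 2

/-- Half the dual tetrahedroid determinant `T*_{a,b,c}`. -/
noncomputable def Tstar (a b c X0 X1 X2 X3 : ℝ) : ℝ :=
  Matrix.det !![(0 : ℝ), c^2, b^2, a^2, X0^2;
                c^2, 0, 1, 1, X1^2;
                b^2, 1, 0, 1, X2^2;
                a^2, 1, 1, 0, X3^2;
                X0^2, X1^2, X2^2, X3^2, 0] / 2

/-- Duality scaling identity:
`T*_{a,b,c}(abc·X₀, c·X₁, b·X₂, a·X₃) = (abc)²·T_{a,b,c}(X₀,X₁,X₂,X₃)`. -/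

theorem tetrahedroid_duality (a b c X0 X1 X2 X3 : ℝ) :
    Tstar a b c (a*b*c*X0) (c*X1) (b*X2) (a*X3) =
      (a*b*c)^2 * T a b c X0 X1 X2 X3 := by
  simp only [T, Tstar, det_fin_five, Matrix.cons_val', Matrix.cons_val_zero, Matrix.cons_val_one,
    Matrix.head_cons, Matrix.empty_val', Matrix.cons_val_fin_one, Matrix.head_fin_const,
    Matrix.of_apply, Matrix.cons_val_succ, Matrix.cons_val]
  norm_num
  ring
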